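/- Let U : ℝ → [0,1] be measurable with ∫ U(x+cz)φ(z)dz > 0 for all x,c in the relevant range, and define F_q(x) = (1−q)^{−1/2} · E_ξ[ξ U(x + (1−q)^{1/2}ξ)] / E_ξ[U(x + (1−q)^{1/2}ξ)] for q ∈ [0,1). Suppose that for c = (1−q)^{1/2} and all x ∈ ℝ, the ratio E_{ξ,ξ'}[(ξ−ξ')² U(x+cξ)U(x+cξ')] / E_{ξ,ξ'}[U(x+cξ)U(x+cξ')] is at most K₂. Then F_q is differentiable with ‖F_q'‖_∞ ≤ (1−q)^{−1}(K₂/2 + 1), hence F_q is Lipschitz. -/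

import Mathlib

open MeasureTheory ProbabilityTheory Real Metric
open scoped ENNReal NNReal

/-! ### Auxiliary lemmas -/

lemma aux_integrable_exp_quad (a b r : ℝ) (ha : 0 < a) :
    Integrable (fun t : ℝ => Real.exp (-(a * (t - r) ^ 2) + b * (t - r))) := by
  have h : (fun t : ℝ => Real.exp (-(a * (t - r) ^ 2) + b * (t - r)))
      = fun t : ℝ => Real.exp (b ^ 2 / (4 * a)) * Real.exp (-a * (t - (r + b / (2 * a))) ^ 2) := by
    funext t
    rw [← Real.exp_add]
    congr 1
    field_simp
    ring
  rw [h]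
  exact ((integrable_exp_neg_mul_sq ha).comp_sub_right (r + b / (2 * a))).const_mul _

lemma aux_poly_exp_bound (u : ℝ) :
    (u ^ 2 + |u| + 1) * Real.exp (-(u ^ 2) / 2) ≤ 10 * Real.exp (-(u ^ 2) / 4) := by
  have h1 : u ^ 2 / 4 ≤ Real.exp (u ^ 2 / 4) := (Real.add_one_le_exp _).trans' (by nlinarith)
  have h2 : (1 : ℝ) ≤ Real.exp (u ^ 2 / 4) := Real.one_le_exp (by positivity)
  have h3 : |u| ≤ 1 + u ^ 2 := by nlinarith [abs_nonneg u, sq_abs u]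
  have key : u ^ 2 + |u| + 1 ≤ 10 * Real.exp (u ^ 2 / 4) := by nlinarith
  calc (u ^ 2 + |u| + 1) * Real.exp (-(u ^ 2) / 2)
      ≤ 10 * Real.exp (u ^ 2 / 4) * Real.exp (-(u ^ 2) / 2) :=
        mul_le_mul_of_nonneg_right key (Real.exp_nonneg _)
    _ = 10 * Real.exp (-(u ^ 2) / 4) := by rw [mul_assoc, ← Real.exp_add]; ring_nf

lemma aux_gauss_transfer (g : ℝ → ℝ) :
    ∫ z, g z ∂(gaussianReal 0 1) = ∫ z, gaussianPDFReal 0 1 z * g z := by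
  rw [gaussianReal_of_var_ne_zero 0 one_ne_zero, gaussianPDF_def]
  have hmeas : Measurable fun z => (gaussianPDFReal 0 1 z).toNNReal :=
    (measurable_gaussianPDFReal 0 1).real_toNNReal
  have h : (fun x => ENNReal.ofReal (gaussianPDFReal 0 1 x))
      = fun x => ((gaussianPDFReal 0 1 x).toNNReal : ℝ≥0∞) := rfl
  rw [h, integral_withDensity_eq_integral_smul hmeas]
  congr 1
  funext z
  rw [NNReal.smul_def, smul_eq_mul, Real.coe_toNNReal _ (gaussianPDFReal_nonneg 0 1 z)]

lemma aux_gauss_integrable_iff (g : ℝ → ℝ) :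
    Integrable g (gaussianReal 0 1) ↔
      Integrable (fun z => gaussianPDFReal 0 1 z * g z) volume := by
  rw [gaussianReal_of_var_ne_zero 0 one_ne_zero, gaussianPDF_def]
  have hmeas : Measurable fun z => (gaussianPDFReal 0 1 z).toNNReal :=
    (measurable_gaussianPDFReal 0 1).real_toNNReal
  have h : (fun x => ENNReal.ofReal (gaussianPDFReal 0 1 x))
      = fun x => ((gaussianPDFReal 0 1 x).toNNReal : ℝ≥0∞) := rfl
  rw [h, integrable_withDensity_iff_integrable_smul hmeas]
  apply integrable_congr
  filter_upwards with z
  rw [NNReal.smul_def, smul_eq_mul, Real.coe_toNNReal _ (gaussianPDFReal_nonneg 0 1 z)]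

lemma aux_pdf_eq (z : ℝ) :
    gaussianPDFReal 0 1 z = (Real.sqrt (2 * Real.pi))⁻¹ * Real.exp (-(z ^ 2) / 2) := by
  simp [gaussianPDFReal, neg_div]

lemma aux_pdf_le (z : ℝ) : gaussianPDFReal 0 1 z ≤ Real.exp (-(z ^ 2) / 2) := by
  rw [aux_pdf_eq]
  have h2 : (1 : ℝ) ≤ Real.sqrt (2 * Real.pi) := by
    rw [show (1:ℝ) = Real.sqrt 1 by simp]
    exact Real.sqrt_le_sqrt (by nlinarith [Real.pi_gt_three])
  calc (Real.sqrt (2 * Real.pi))⁻¹ * Real.exp (-(z ^ 2) / 2)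
      ≤ 1 * Real.exp (-(z ^ 2) / 2) :=
        mul_le_mul_of_nonneg_right (inv_le_one_of_one_le₀ h2) (Real.exp_nonneg _)
    _ = _ := one_mul _

/-- Bound on `a * pdf u` when `|a| ≤ u² + |u| + 1`. -/
lemma aux_bound_gen {a u : ℝ} (h : |a| ≤ u ^ 2 + |u| + 1) :
    |a * gaussianPDFReal 0 1 u| ≤ 10 * Real.exp (-(u ^ 2) / 4) := by
  rw [abs_mul, abs_of_nonneg (gaussianPDFReal_nonneg 0 1 u)]
  calc |a| * gaussianPDFReal 0 1 u
      ≤ (u ^ 2 + |u| + 1) * Real.exp (-(u ^ 2) / 2) := by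
        apply mul_le_mul h (aux_pdf_le u) (gaussianPDFReal_nonneg 0 1 u)
        nlinarith [abs_nonneg u, sq_nonneg u]
    _ ≤ 10 * Real.exp (-(u ^ 2) / 4) := aux_poly_exp_bound u

lemma aux_gauss_sub (f W : ℝ → ℝ) (c x : ℝ) (hc : 0 < c) :
    ∫ z, f z * W (x + c * z) ∂(gaussianReal 0 1)
      = c⁻¹ * ∫ t, W t * (f ((t - x) / c) * gaussianPDFReal 0 1 ((t - x) / c)) := by
  rw [aux_gauss_transfer]
  set H : ℝ → ℝ := fun t => W t * (f ((t - x) / c) * gaussianPDFReal 0 1 ((t - x) / c)) with hH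
  have h1 : ∫ t, H t = ∫ s, H (s + x) := (integral_add_right_eq_self H x).symm
  have h2 : ∫ s, H (s + x) = |c| • ∫ z, H (c * z + x) := by
    rw [Measure.integral_comp_mul_left (fun s => H (s + x)) c, smul_smul, abs_inv,
      mul_inv_cancel₀ (by positivity), one_smul]
  have h3 : ∀ z, H (c * z + x) = gaussianPDFReal 0 1 z * (f z * W (x + c * z)) := by
    intro z
    have hz : (c * z + x - x) / c = z := by field_simp; ring
    simp only [hH, hz]
    ring
  rw [h1, h2]
  simp only [h3]
  rw [smul_eq_mul, abs_of_pos hc, ← mul_assoc, inv_mul_cancel₀ (ne_of_gt hc), one_mul]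

/-- Integrability over the Gaussian measure. -/
lemma aux_int_gauss (W : ℝ → ℝ) (hW : Measurable W) (hWb : ∀ t, |W t| ≤ 1)
    (f : ℝ → ℝ) (hf : Measurable f) (hbf : ∀ z, |f z| ≤ z ^ 2 + |z| + 1) :
    Integrable (fun z => f z * W z) (gaussianReal 0 1) := by
  rw [aux_gauss_integrable_iff]
  apply Integrable.mono (g := fun z => 10 * Real.exp (-((4:ℝ)⁻¹ * (z - 0) ^ 2) + 0 * (z - 0)))
  · exact (aux_integrable_exp_quad 4⁻¹ 0 0 (by norm_num)).const_mul 10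
  · exact ((measurable_gaussianPDFReal 0 1).mul (hf.mul hW)).aestronglyMeasurable
  · filter_upwards with z
    rw [Real.norm_eq_abs, Real.norm_eq_abs]
    have harg : -((4:ℝ)⁻¹ * (z - 0) ^ 2) + 0 * (z - 0) = -(z ^ 2) / 4 := by ring
    rw [harg, abs_of_nonneg (by positivity : (0:ℝ) ≤ 10 * Real.exp (-(z ^ 2) / 4))]
    have h1 : |gaussianPDFReal 0 1 z * (f z * W z)|
        = |f z * gaussianPDFReal 0 1 z| * |W z| := by
      rw [abs_mul, abs_mul, abs_mul]; ring
    rw [h1]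
    calc |f z * gaussianPDFReal 0 1 z| * |W z|
        ≤ (10 * Real.exp (-(z ^ 2) / 4)) * 1 :=
          mul_le_mul (aux_bound_gen (hbf z)) (hWb z) (abs_nonneg _) (by positivity)
      _ = 10 * Real.exp (-(z ^ 2) / 4) := mul_one _

/-- Integrability of bounded function times Gaussian-dominated kernel (Lebesgue). -/
lemma aux_integrable_kern (W : ℝ → ℝ) (hW : Measurable W) (hWb : ∀ t, |W t| ≤ 1)
    (g : ℝ → ℝ) (hg : Measurable g) (C : ℝ)
    (hbg : ∀ u, |g u| ≤ C * Real.exp (-(u ^ 2) / 4))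
    (c : ℝ) (hc : 0 < c) (x : ℝ) :
    Integrable (fun t => W t * g ((t - x) / c)) := by
  have hC : 0 ≤ C := by
    have := (abs_nonneg (g 0)).trans (hbg 0)
    nlinarith [Real.exp_pos (-((0:ℝ) ^ 2) / 4)]
  apply Integrable.mono (g := fun t => C * Real.exp (-((4 * c ^ 2)⁻¹ * (t - x) ^ 2) + 0 * (t - x)))
  · exact (aux_integrable_exp_quad _ 0 x (by positivity)).const_mul C
  · exact (hW.mul (hg.comp ((measurable_id.sub_const x).div_const c))).aestronglyMeasurable
  · filter_upwards with t
    rw [Real.norm_eq_abs, Real.norm_eq_abs, abs_mul]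
    have h1 : |W t| * |g ((t - x) / c)| ≤ 1 * (C * Real.exp (-(((t - x) / c) ^ 2) / 4)) :=
      mul_le_mul (hWb t) (hbg _) (abs_nonneg _) zero_le_one
    have h2 : -(((t - x) / c) ^ 2) / 4 = -((4 * c ^ 2)⁻¹ * (t - x) ^ 2) + 0 * (t - x) := by
      ring
    rw [h2] at h1
    have h3 : |C * Real.exp (-((4 * c ^ 2)⁻¹ * (t - x) ^ 2) + 0 * (t - x))|
        = C * Real.exp (-((4 * c ^ 2)⁻¹ * (t - x) ^ 2) + 0 * (t - x)) :=
      abs_of_nonneg (by positivity)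
    rw [h3]
    linarith

/-- Differentiation under the integral sign for Gaussian-type kernels. -/
lemma aux_hasDerivAt_kern (W : ℝ → ℝ) (hW : Measurable W) (hWb : ∀ t, |W t| ≤ 1)
    (g g' : ℝ → ℝ) (hg : Measurable g) (hg' : Measurable g')
    (hd : ∀ u, HasDerivAt g (g' u) u) (C : ℝ)
    (hbg : ∀ u, |g u| ≤ C * Real.exp (-(u ^ 2) / 4))
    (hbg' : ∀ u, |g' u| ≤ C * Real.exp (-(u ^ 2) / 4))
    (c : ℝ) (hc : 0 < c) (x₀ : ℝ) :
    HasDerivAt (fun x => ∫ t, W t * g ((t - x) / c))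
      (∫ t, W t * (-c⁻¹ * g' ((t - x₀) / c))) x₀ := by
  have hC : 0 ≤ C := by
    have := (abs_nonneg (g 0)).trans (hbg 0)
    nlinarith [Real.exp_pos (-((0:ℝ) ^ 2) / 4)]
  set bound : ℝ → ℝ := fun t => c⁻¹ * C *
      (Real.exp (-((4 * c ^ 2)⁻¹ * (t - x₀) ^ 2) + (2 * c ^ 2)⁻¹ * (t - x₀))
        + Real.exp (-((4 * c ^ 2)⁻¹ * (t - x₀) ^ 2) + -(2 * c ^ 2)⁻¹ * (t - x₀))) with hbound
  have key := hasDerivAt_integral_of_dominated_loc_of_deriv_le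
    (F := fun x t => W t * g ((t - x) / c))
    (F' := fun x t => W t * (-c⁻¹ * g' ((t - x) / c)))
    (x₀ := x₀) (bound := bound) (μ := volume) (ball_mem_nhds x₀ one_pos)
    ?_ ?_ ?_ ?_ ?_ ?_
  · exact key.2
  · filter_upwards with x
    exact (hW.mul (hg.comp ((measurable_id.sub_const x).div_const c))).aestronglyMeasurable
  · exact aux_integrable_kern W hW hWb g hg C hbg c hc x₀
  · exact (hW.mul ((hg'.comp ((measurable_id.sub_const x₀).div_const c)).const_mul
      (-c⁻¹))).aestronglyMeasurable
  · filter_upwards with t x hx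
    have hx1 : |x - x₀| < 1 := by rwa [mem_ball, Real.dist_eq] at hx
    have step1 : ‖W t * (-c⁻¹ * g' ((t - x) / c))‖
        ≤ c⁻¹ * (C * Real.exp (-(((t - x) / c) ^ 2) / 4)) := by
      rw [Real.norm_eq_abs, abs_mul, abs_mul, abs_neg, abs_inv, abs_of_pos hc]
      calc |W t| * (c⁻¹ * |g' ((t - x) / c)|)
          ≤ 1 * (c⁻¹ * (C * Real.exp (-(((t - x) / c) ^ 2) / 4))) := by
            apply mul_le_mul (hWb t) _ (by positivity) zero_le_one
            exact mul_le_mul_of_nonneg_left (hbg' _) (by positivity)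
        _ = c⁻¹ * (C * Real.exp (-(((t - x) / c) ^ 2) / 4)) := one_mul _
    have step2 : Real.exp (-(((t - x) / c) ^ 2) / 4)
        ≤ Real.exp (-((4 * c ^ 2)⁻¹ * (t - x₀) ^ 2) + (2 * c ^ 2)⁻¹ * |t - x₀|) := by
      apply Real.exp_le_exp.2
      have hsq : (t - x₀) ^ 2 - 2 * |t - x₀| ≤ (t - x) ^ 2 := by
        have h'' : (t - x₀) * (x - x₀) ≤ |t - x₀| := by
          calc (t - x₀) * (x - x₀) ≤ |(t - x₀) * (x - x₀)| := le_abs_self _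
            _ = |t - x₀| * |x - x₀| := abs_mul _ _
            _ ≤ |t - x₀| * 1 := mul_le_mul_of_nonneg_left hx1.le (abs_nonneg _)
            _ = |t - x₀| := mul_one _
        nlinarith [sq_nonneg (x - x₀)]
      have e1 : -(((t - x) / c) ^ 2) / 4 = -((t - x) ^ 2) * (4 * c ^ 2)⁻¹ := by ring
      have e2 : -((4 * c ^ 2)⁻¹ * (t - x₀) ^ 2) + (2 * c ^ 2)⁻¹ * |t - x₀|
          = (-((t - x₀) ^ 2) + 2 * |t - x₀|) * (4 * c ^ 2)⁻¹ := by ring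
      rw [e1, e2]
      exact mul_le_mul_of_nonneg_right (by linarith) (by positivity)
    have step3 : Real.exp (-((4 * c ^ 2)⁻¹ * (t - x₀) ^ 2) + (2 * c ^ 2)⁻¹ * |t - x₀|)
        ≤ Real.exp (-((4 * c ^ 2)⁻¹ * (t - x₀) ^ 2) + (2 * c ^ 2)⁻¹ * (t - x₀))
          + Real.exp (-((4 * c ^ 2)⁻¹ * (t - x₀) ^ 2) + -(2 * c ^ 2)⁻¹ * (t - x₀)) := by
      rcases abs_cases (t - x₀) with ⟨h, _⟩ | ⟨h, _⟩
      · rw [h]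
        exact le_add_of_nonneg_right (Real.exp_nonneg _)
      · have h2 : (2 * c ^ 2)⁻¹ * |t - x₀| = -(2 * c ^ 2)⁻¹ * (t - x₀) := by rw [h]; ring
        rw [h2]
        exact le_add_of_nonneg_left (Real.exp_nonneg _)
    calc ‖W t * (-c⁻¹ * g' ((t - x) / c))‖
        ≤ c⁻¹ * (C * Real.exp (-(((t - x) / c) ^ 2) / 4)) := step1
      _ ≤ c⁻¹ * (C * (Real.exp (-((4 * c ^ 2)⁻¹ * (t - x₀) ^ 2) + (2 * c ^ 2)⁻¹ * (t - x₀))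
            + Real.exp (-((4 * c ^ 2)⁻¹ * (t - x₀) ^ 2) + -(2 * c ^ 2)⁻¹ * (t - x₀)))) := by
          apply mul_le_mul_of_nonneg_left _ (by positivity)
          exact mul_le_mul_of_nonneg_left (step2.trans step3) hC
      _ = bound t := by rw [hbound]; ring
  · exact ((aux_integrable_exp_quad ((4 * c ^ 2)⁻¹) ((2 * c ^ 2)⁻¹) x₀ (by positivity)).add
      (aux_integrable_exp_quad ((4 * c ^ 2)⁻¹) (-(2 * c ^ 2)⁻¹) x₀ (by positivity))).const_mul _
  · filter_upwards with t x _
    have inner : HasDerivAt (fun x => (t - x) / c) (-c⁻¹) x := by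
      have h := ((hasDerivAt_id x).const_sub t).div_const c
      simpa [neg_div, one_div] using h
    have h := (hd ((t - x) / c)).comp x inner
    have h2 : g' ((t - x) / c) * -c⁻¹ = -c⁻¹ * g' ((t - x) / c) := by ring
    rw [h2] at h
    exact h.const_mul (W t)

/-- Derivative of the standard Gaussian pdf. -/
lemma aux_pdf_hasDeriv (u : ℝ) :
    HasDerivAt (gaussianPDFReal 0 1) (-u * gaussianPDFReal 0 1 u) u := by
  have hfun : gaussianPDFReal 0 1
      = fun v => (Real.sqrt (2 * Real.pi))⁻¹ * Real.exp (-(v ^ 2) / 2) := funext aux_pdf_eq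
  rw [hfun]
  have hinner : HasDerivAt (fun v : ℝ => -(v ^ 2) / 2) (-u) u := by
    have h := ((hasDerivAt_pow 2 u).neg).div_const 2
    simpa using h.congr_deriv (by push_cast; ring)
  have h := (hinner.exp).const_mul (Real.sqrt (2 * Real.pi))⁻¹
  exact h.congr_deriv (by ring)


lemma aux_integral_lin3 {μ : Measure ℝ} {f g h : ℝ → ℝ} (p r s : ℝ)
    (hf : Integrable f μ) (hg : Integrable g μ) (hh : Integrable h μ) :
    ∫ z, (p * f z - r * g z + s * h z) ∂μ
      = p * (∫ z, f z ∂μ) - r * (∫ z, g z ∂μ) + s * (∫ z, h z ∂μ) := by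
  have h1 : Integrable (fun z => p * f z) μ := hf.const_mul p
  have h2 : Integrable (fun z => r * g z) μ := hg.const_mul r
  have h3 : Integrable (fun z => s * h z) μ := hh.const_mul s
  have h4 : Integrable (fun z => p * f z - r * g z) μ := h1.sub h2
  calc ∫ z, (p * f z - r * g z + s * h z) ∂μ
      = (∫ z, (p * f z - r * g z) ∂μ) + ∫ z, s * h z ∂μ := integral_add h4 h3
    _ = ((∫ z, p * f z ∂μ) - ∫ z, r * g z ∂μ) + ∫ z, s * h z ∂μ :=
        congrArg (· + ∫ z, s * h z ∂μ) (integral_sub h1 h2)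
    _ = _ := by rw [integral_const_mul, integral_const_mul, integral_const_mul]

set_option maxHeartbeats 1600000 in
/-- For measurable `U : ℝ → [0,1]` with positive Gaussian smoothings and
`F_q(x) = (1−q)^{−1/2} E_ξ[ξ U(x+√(1−q)ξ)] / E_ξ[U(x+√(1−q)ξ)]` (`q ∈ [0,1)`), if for
`c = √(1−q)` and all `x` the ratio
`E[(ξ−ξ')²U(x+cξ)U(x+cξ')] / E[U(x+cξ)U(x+cξ')] ≤ K₂`, then `F_q` is differentiable with
`‖F_q'‖_∞ ≤ (1−q)^{−1}(K₂/2 + 1)`, hence `F_q` is Lipschitz with that constant. -/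
theorem Fq_lipschitz
    (U : ℝ → ℝ) (hmeas : Measurable U) (h0 : ∀ x, 0 ≤ U x) (h1 : ∀ x, U x ≤ 1)
    (q : ℝ) (hq0 : 0 ≤ q) (hq1 : q < 1)
    (hpos : ∀ x : ℝ, 0 < ∫ z, U (x + Real.sqrt (1 - q) * z) ∂(gaussianReal 0 1))
    (K₂ : ℝ)
    (hK : ∀ x : ℝ,
      (∫ z, ∫ z', (z - z') ^ 2 *
            (U (x + Real.sqrt (1 - q) * z) * U (x + Real.sqrt (1 - q) * z'))
          ∂(gaussianReal 0 1) ∂(gaussianReal 0 1))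
        ≤ K₂ * ∫ z, ∫ z',
            U (x + Real.sqrt (1 - q) * z) * U (x + Real.sqrt (1 - q) * z')
          ∂(gaussianReal 0 1) ∂(gaussianReal 0 1)) :
    (∀ x : ℝ, ∃ d : ℝ,
      HasDerivAt (fun y : ℝ =>
          (1 - q) ^ (-(1 / 2) : ℝ) *
            (∫ z, z * U (y + Real.sqrt (1 - q) * z) ∂(gaussianReal 0 1)) /
            (∫ z, U (y + Real.sqrt (1 - q) * z) ∂(gaussianReal 0 1))) d x ∧
        |d| ≤ (1 - q)⁻¹ * (K₂ / 2 + 1)) ∧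
    LipschitzWith (Real.toNNReal ((1 - q)⁻¹ * (K₂ / 2 + 1)))
      (fun y : ℝ =>
        (1 - q) ^ (-(1 / 2) : ℝ) *
          (∫ z, z * U (y + Real.sqrt (1 - q) * z) ∂(gaussianReal 0 1)) /
          (∫ z, U (y + Real.sqrt (1 - q) * z) ∂(gaussianReal 0 1))) := by
  have h1q : (0:ℝ) < 1 - q := by linarith
  set c := Real.sqrt (1 - q) with hcdef
  have hc : 0 < c := Real.sqrt_pos.2 h1q
  have hc2 : c ^ 2 = 1 - q := Real.sq_sqrt h1q.le
  set a := (1 - q) ^ (-(1 / 2) : ℝ) with hadef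
  have ha : a = c⁻¹ := by
    rw [hadef, Real.rpow_neg h1q.le, ← Real.sqrt_eq_rpow, hcdef]
  -- basic measurability and bounds
  have hUb : ∀ t, |U t| ≤ 1 := fun t => abs_le.2 ⟨by linarith [h0 t], h1 t⟩
  have mpdf : Measurable (gaussianPDFReal 0 1) := measurable_gaussianPDFReal 0 1
  have mg0' : Measurable fun u : ℝ => -u * gaussianPDFReal 0 1 u := measurable_id.neg.mul mpdf
  have mg1 : Measurable fun u : ℝ => u * gaussianPDFReal 0 1 u := measurable_id.mul mpdf
  have mg1' : Measurable fun u : ℝ => (1 - u ^ 2) * gaussianPDFReal 0 1 u :=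
    (measurable_const.sub (measurable_id.pow_const 2)).mul mpdf
  have mg2 : Measurable fun u : ℝ => u ^ 2 * gaussianPDFReal 0 1 u :=
    (measurable_id.pow_const 2).mul mpdf
  have hb0 : ∀ u : ℝ, |gaussianPDFReal 0 1 u| ≤ 10 * Real.exp (-(u ^ 2) / 4) := by
    intro u
    have h := aux_bound_gen (a := 1) (u := u) (by
      rw [abs_one]; nlinarith [abs_nonneg u, sq_nonneg u])
    simpa using h
  have hb1 : ∀ u : ℝ, |u * gaussianPDFReal 0 1 u| ≤ 10 * Real.exp (-(u ^ 2) / 4) :=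
    fun u => aux_bound_gen (by nlinarith [abs_nonneg u, sq_nonneg u] : |u| ≤ u ^ 2 + |u| + 1)
  have hb2 : ∀ u : ℝ, |u ^ 2 * gaussianPDFReal 0 1 u| ≤ 10 * Real.exp (-(u ^ 2) / 4) :=
    fun u => aux_bound_gen (by
      rw [abs_of_nonneg (sq_nonneg u)]; nlinarith [abs_nonneg u] : |u ^ 2| ≤ u ^ 2 + |u| + 1)
  have hb0' : ∀ u : ℝ, |(-u) * gaussianPDFReal 0 1 u| ≤ 10 * Real.exp (-(u ^ 2) / 4) :=
    fun u => aux_bound_gen (by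
      rw [abs_neg]; nlinarith [abs_nonneg u, sq_nonneg u] : |(-u)| ≤ u ^ 2 + |u| + 1)
  have hb1' : ∀ u : ℝ, |(1 - u ^ 2) * gaussianPDFReal 0 1 u| ≤ 10 * Real.exp (-(u ^ 2) / 4) :=
    fun u => aux_bound_gen (abs_le.2
      ⟨by nlinarith [abs_nonneg u], by nlinarith [abs_nonneg u]⟩)
  have hd1 : ∀ u : ℝ, HasDerivAt (fun v : ℝ => v * gaussianPDFReal 0 1 v)
      ((1 - u ^ 2) * gaussianPDFReal 0 1 u) u := by
    intro u
    have h' : HasDerivAt (fun v : ℝ => v * gaussianPDFReal 0 1 v)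
        (1 * gaussianPDFReal 0 1 u + u * (-u * gaussianPDFReal 0 1 u)) u :=
      (hasDerivAt_id' (x := u)).mul (aux_pdf_hasDeriv u)
    have h2 : 1 * gaussianPDFReal 0 1 u + u * (-u * gaussianPDFReal 0 1 u)
        = (1 - u ^ 2) * gaussianPDFReal 0 1 u := by ring
    rwa [h2] at h'
  -- the key derivative statement
  have key : ∀ x : ℝ, ∃ d : ℝ,
      HasDerivAt (fun y : ℝ => a * (∫ z, z * U (y + c * z) ∂(gaussianReal 0 1))
        / (∫ z, U (y + c * z) ∂(gaussianReal 0 1))) d x ∧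
      |d| ≤ (1 - q)⁻¹ * (K₂ / 2 + 1) := by
    intro x
    -- gaussian-side integrability
    have mW : Measurable fun z : ℝ => U (x + c * z) :=
      hmeas.comp (measurable_const.add (measurable_id.const_mul c))
    have mWb : ∀ z : ℝ, |U (x + c * z)| ≤ 1 := fun z => hUb _
    have i0 : Integrable (fun z : ℝ => U (x + c * z)) (gaussianReal 0 1) := by
      have h := aux_int_gauss (fun z => U (x + c * z)) mW mWb (fun _ => 1) measurable_const
        (fun z => by rw [abs_one]; nlinarith [abs_nonneg z, sq_nonneg z])
      simpa using h
    have i1 : Integrable (fun z : ℝ => z * U (x + c * z)) (gaussianReal 0 1) :=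
      aux_int_gauss (fun z => U (x + c * z)) mW mWb (fun z => z) measurable_id
        (fun z => by nlinarith [abs_nonneg z, sq_nonneg z])
    have i2 : Integrable (fun z : ℝ => z ^ 2 * U (x + c * z)) (gaussianReal 0 1) :=
      aux_int_gauss (fun z => U (x + c * z)) mW mWb (fun z => z ^ 2) (measurable_id.pow_const 2)
        (fun z => by rw [abs_of_nonneg (sq_nonneg z)]; nlinarith [abs_nonneg z])
    have hDpos : (0:ℝ) < ∫ z, U (x + c * z) ∂(gaussianReal 0 1) := hpos x
    -- expansion identities
    have hDD : (∫ z, ∫ z', U (x + c * z) * U (x + c * z')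
          ∂(gaussianReal 0 1) ∂(gaussianReal 0 1))
        = (∫ z, U (x + c * z) ∂(gaussianReal 0 1)) * (∫ z, U (x + c * z) ∂(gaussianReal 0 1)) := by
      have h1 : (∫ z, ∫ z', U (x + c * z) * U (x + c * z')
            ∂(gaussianReal 0 1) ∂(gaussianReal 0 1))
          = ∫ z, U (x + c * z) * (∫ z', U (x + c * z') ∂(gaussianReal 0 1))
            ∂(gaussianReal 0 1) := by
        congr 1
        funext z
        exact integral_const_mul _ _
      rw [h1, integral_mul_const]
    have hE2 : (∫ z, ∫ z', (z - z') ^ 2 * (U (x + c * z) * U (x + c * z'))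
          ∂(gaussianReal 0 1) ∂(gaussianReal 0 1))
        = 2 * ((∫ z, z ^ 2 * U (x + c * z) ∂(gaussianReal 0 1))
              * (∫ z, U (x + c * z) ∂(gaussianReal 0 1))
            - (∫ z, z * U (x + c * z) ∂(gaussianReal 0 1))
              * (∫ z, z * U (x + c * z) ∂(gaussianReal 0 1))) := by
      have hinner : ∀ z : ℝ, (∫ z', (z - z') ^ 2 * (U (x + c * z) * U (x + c * z'))
            ∂(gaussianReal 0 1))
          = U (x + c * z) * (z ^ 2 * (∫ z', U (x + c * z') ∂(gaussianReal 0 1))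
              - 2 * z * (∫ z', z' * U (x + c * z') ∂(gaussianReal 0 1))
              + (∫ z', z' ^ 2 * U (x + c * z') ∂(gaussianReal 0 1))) := by
        intro z
        have e : (fun z' => (z - z') ^ 2 * (U (x + c * z) * U (x + c * z')))
            = fun z' => U (x + c * z) * (z ^ 2 * U (x + c * z')
                - 2 * z * (z' * U (x + c * z')) + 1 * (z' ^ 2 * U (x + c * z'))) := by
          funext z'; ring
        rw [e, integral_const_mul]
        congr 1
        have hlin := aux_integral_lin3 (z ^ 2) (2 * z) 1 i0 i1 i2
        calc (∫ z', (z ^ 2 * U (x + c * z') - 2 * z * (z' * U (x + c * z'))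
              + 1 * (z' ^ 2 * U (x + c * z'))) ∂(gaussianReal 0 1))
            = z ^ 2 * (∫ z', U (x + c * z') ∂(gaussianReal 0 1))
              - 2 * z * (∫ z', z' * U (x + c * z') ∂(gaussianReal 0 1))
              + 1 * (∫ z', z' ^ 2 * U (x + c * z') ∂(gaussianReal 0 1)) := hlin
          _ = _ := by ring
      have h1 : (∫ z, ∫ z', (z - z') ^ 2 * (U (x + c * z) * U (x + c * z'))
            ∂(gaussianReal 0 1) ∂(gaussianReal 0 1))
          = ∫ z, U (x + c * z) * (z ^ 2 * (∫ z', U (x + c * z') ∂(gaussianReal 0 1))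
              - 2 * z * (∫ z', z' * U (x + c * z') ∂(gaussianReal 0 1))
              + (∫ z', z' ^ 2 * U (x + c * z') ∂(gaussianReal 0 1))) ∂(gaussianReal 0 1) := by
        congr 1
        funext z
        exact hinner z
      have e2 : (fun z : ℝ => U (x + c * z)
            * (z ^ 2 * (∫ z', U (x + c * z') ∂(gaussianReal 0 1))
              - 2 * z * (∫ z', z' * U (x + c * z') ∂(gaussianReal 0 1))
              + (∫ z', z' ^ 2 * U (x + c * z') ∂(gaussianReal 0 1))))
          = fun z : ℝ => (∫ z', U (x + c * z') ∂(gaussianReal 0 1)) * (z ^ 2 * U (x + c * z))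
            - (2 * (∫ z', z' * U (x + c * z') ∂(gaussianReal 0 1))) * (z * U (x + c * z))
            + (∫ z', z' ^ 2 * U (x + c * z') ∂(gaussianReal 0 1)) * U (x + c * z) := by
        funext z; ring
      have h3 : (∫ z, ((∫ z', U (x + c * z') ∂(gaussianReal 0 1)) * (z ^ 2 * U (x + c * z))
            - (2 * (∫ z', z' * U (x + c * z') ∂(gaussianReal 0 1))) * (z * U (x + c * z))
            + (∫ z', z' ^ 2 * U (x + c * z') ∂(gaussianReal 0 1)) * U (x + c * z))
              ∂(gaussianReal 0 1))
          = (∫ z', U (x + c * z') ∂(gaussianReal 0 1))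
              * (∫ z, z ^ 2 * U (x + c * z) ∂(gaussianReal 0 1))
            - (2 * (∫ z', z' * U (x + c * z') ∂(gaussianReal 0 1)))
              * (∫ z, z * U (x + c * z) ∂(gaussianReal 0 1))
            + (∫ z', z' ^ 2 * U (x + c * z') ∂(gaussianReal 0 1))
              * (∫ z, U (x + c * z) ∂(gaussianReal 0 1)) :=
        aux_integral_lin3 _ _ _ i2 i1 i0
      rw [h1, e2, h3]
      ring
    -- Lebesgue-kernel representations
    have hDfun : (fun y : ℝ => ∫ z, U (y + c * z) ∂(gaussianReal 0 1))
        = fun y : ℝ => c⁻¹ * ∫ t, U t * gaussianPDFReal 0 1 ((t - y) / c) := by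
      funext y
      have h := aux_gauss_sub (fun _ => (1:ℝ)) U c y hc
      simpa using h
    have hNfun : (fun y : ℝ => ∫ z, z * U (y + c * z) ∂(gaussianReal 0 1))
        = fun y : ℝ => c⁻¹ * ∫ t, U t * ((t - y) / c * gaussianPDFReal 0 1 ((t - y) / c)) := by
      funext y
      have h := aux_gauss_sub (fun z => z) U c y hc
      simpa using h
    have hDx : (∫ z, U (x + c * z) ∂(gaussianReal 0 1))
        = c⁻¹ * ∫ t, U t * gaussianPDFReal 0 1 ((t - x) / c) := congrFun hDfun x
    have hNx : (∫ z, z * U (x + c * z) ∂(gaussianReal 0 1))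
        = c⁻¹ * ∫ t, U t * ((t - x) / c * gaussianPDFReal 0 1 ((t - x) / c)) :=
      congrFun hNfun x
    have hMx : (∫ z, z ^ 2 * U (x + c * z) ∂(gaussianReal 0 1))
        = c⁻¹ * ∫ t, U t * (((t - x) / c) ^ 2 * gaussianPDFReal 0 1 ((t - x) / c)) :=
      aux_gauss_sub (fun z => z ^ 2) U c x hc
    have hJ0 : (∫ t, U t * gaussianPDFReal 0 1 ((t - x) / c))
        = c * ∫ z, U (x + c * z) ∂(gaussianReal 0 1) := by
      rw [hDx, mul_inv_cancel_left₀ hc.ne']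
    have hJ1 : (∫ t, U t * ((t - x) / c * gaussianPDFReal 0 1 ((t - x) / c)))
        = c * ∫ z, z * U (x + c * z) ∂(gaussianReal 0 1) := by
      rw [hNx, mul_inv_cancel_left₀ hc.ne']
    have hJ2 : (∫ t, U t * (((t - x) / c) ^ 2 * gaussianPDFReal 0 1 ((t - x) / c)))
        = c * ∫ z, z ^ 2 * U (x + c * z) ∂(gaussianReal 0 1) := by
      rw [hMx, mul_inv_cancel_left₀ hc.ne']
    -- kernel derivatives
    have hkern0 : HasDerivAt (fun y => ∫ t, U t * gaussianPDFReal 0 1 ((t - y) / c))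
        (∫ t, U t * (-c⁻¹ * (-((t - x) / c) * gaussianPDFReal 0 1 ((t - x) / c)))) x :=
      aux_hasDerivAt_kern U hmeas hUb (gaussianPDFReal 0 1)
        (fun u => -u * gaussianPDFReal 0 1 u) mpdf mg0' aux_pdf_hasDeriv 10 hb0 hb0' c hc x
    have hkern1 : HasDerivAt
        (fun y => ∫ t, U t * ((t - y) / c * gaussianPDFReal 0 1 ((t - y) / c)))
        (∫ t, U t * (-c⁻¹ * ((1 - ((t - x) / c) ^ 2) * gaussianPDFReal 0 1 ((t - x) / c)))) x :=
      aux_hasDerivAt_kern U hmeas hUb (fun u => u * gaussianPDFReal 0 1 u)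
        (fun u => (1 - u ^ 2) * gaussianPDFReal 0 1 u) mg1 mg1' hd1 10 hb1 hb1' c hc x
    -- kernel integrabilities
    have intK0 : Integrable (fun t => U t * gaussianPDFReal 0 1 ((t - x) / c)) :=
      aux_integrable_kern U hmeas hUb (gaussianPDFReal 0 1) mpdf 10 hb0 c hc x
    have intK2 : Integrable
        (fun t => U t * (((t - x) / c) ^ 2 * gaussianPDFReal 0 1 ((t - x) / c))) :=
      aux_integrable_kern U hmeas hUb (fun u => u ^ 2 * gaussianPDFReal 0 1 u) mg2 10 hb2 c hc x
    -- rewrite derivative values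
    have hval0 : (∫ t, U t * (-c⁻¹ * (-((t - x) / c) * gaussianPDFReal 0 1 ((t - x) / c))))
        = c⁻¹ * ∫ t, U t * ((t - x) / c * gaussianPDFReal 0 1 ((t - x) / c)) := by
      rw [← integral_const_mul]
      congr 1
      funext t
      ring
    have hval1 : (∫ t, U t * (-c⁻¹ * ((1 - ((t - x) / c) ^ 2)
            * gaussianPDFReal 0 1 ((t - x) / c))))
        = c⁻¹ * ((∫ t, U t * (((t - x) / c) ^ 2 * gaussianPDFReal 0 1 ((t - x) / c)))
            - ∫ t, U t * gaussianPDFReal 0 1 ((t - x) / c)) := by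
      have e : (fun t => U t * (-c⁻¹ * ((1 - ((t - x) / c) ^ 2)
              * gaussianPDFReal 0 1 ((t - x) / c))))
          = fun t => c⁻¹ * (U t * (((t - x) / c) ^ 2 * gaussianPDFReal 0 1 ((t - x) / c))
              - U t * gaussianPDFReal 0 1 ((t - x) / c)) := by
        funext t; ring
      have hsub : (∫ t, (U t * (((t - x) / c) ^ 2 * gaussianPDFReal 0 1 ((t - x) / c))
              - U t * gaussianPDFReal 0 1 ((t - x) / c)))
          = (∫ t, U t * (((t - x) / c) ^ 2 * gaussianPDFReal 0 1 ((t - x) / c)))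
            - ∫ t, U t * gaussianPDFReal 0 1 ((t - x) / c) := integral_sub intK2 intK0
      rw [e, integral_const_mul, hsub]
    -- derivatives of the gaussian-side integrals
    have hDd : HasDerivAt (fun y : ℝ => ∫ z, U (y + c * z) ∂(gaussianReal 0 1))
        (c⁻¹ * ∫ z, z * U (x + c * z) ∂(gaussianReal 0 1)) x := by
      have h := hkern0.const_mul c⁻¹
      have hveq : c⁻¹ * (∫ t, U t * (-c⁻¹ * (-((t - x) / c)
              * gaussianPDFReal 0 1 ((t - x) / c))))
          = c⁻¹ * ∫ z, z * U (x + c * z) ∂(gaussianReal 0 1) := by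
        rw [hval0, hJ1, inv_mul_cancel_left₀ hc.ne']
      rw [hDfun]
      exact h.congr_deriv hveq
    have hNd : HasDerivAt (fun y : ℝ => ∫ z, z * U (y + c * z) ∂(gaussianReal 0 1))
        (c⁻¹ * ((∫ z, z ^ 2 * U (x + c * z) ∂(gaussianReal 0 1))
          - ∫ z, U (x + c * z) ∂(gaussianReal 0 1))) x := by
      have h := hkern1.const_mul c⁻¹
      have hveq : c⁻¹ * (∫ t, U t * (-c⁻¹ * ((1 - ((t - x) / c) ^ 2)
              * gaussianPDFReal 0 1 ((t - x) / c))))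
          = c⁻¹ * ((∫ z, z ^ 2 * U (x + c * z) ∂(gaussianReal 0 1))
            - ∫ z, U (x + c * z) ∂(gaussianReal 0 1)) := by
        rw [hval1, hJ2, hJ0, ← mul_sub, inv_mul_cancel_left₀ hc.ne']
      rw [hNfun]
      exact h.congr_deriv hveq
    -- assemble the derivative of F
    have hdiv := hNd.div hDd (ne_of_gt hDpos)
    have hF := hdiv.const_mul a
    set M := ∫ z, z ^ 2 * U (x + c * z) ∂(gaussianReal 0 1) with hM
    set N := ∫ z, z * U (x + c * z) ∂(gaussianReal 0 1) with hN
    set D := ∫ z, U (x + c * z) ∂(gaussianReal 0 1) with hD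
    refine ⟨a * ((c⁻¹ * (M - D) * D - N * (c⁻¹ * N)) / D ^ 2), ?_, ?_⟩
    · have hmd : (fun y : ℝ => a * (∫ z, z * U (y + c * z) ∂(gaussianReal 0 1))
            / (∫ z, U (y + c * z) ∂(gaussianReal 0 1)))
          = fun y : ℝ => a * ((∫ z, z * U (y + c * z) ∂(gaussianReal 0 1))
            / (∫ z, U (y + c * z) ∂(gaussianReal 0 1))) := by
        funext y
        rw [mul_div_assoc]
      rw [hmd]
      exact hF
    · -- the bound
      clear_value M N D
      have hSnn : 0 ≤ 2 * (M * D - N * N) := by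
        rw [← hE2]
        apply integral_nonneg
        intro z
        apply integral_nonneg
        intro z'
        exact mul_nonneg (sq_nonneg _) (mul_nonneg (h0 _) (h0 _))
      have hKx : 2 * (M * D - N * N) ≤ K₂ * (D * D) := by
        have h := hK x
        rw [hE2, hDD] at h
        exact h
      have hK2 : 0 ≤ K₂ := by nlinarith [mul_pos hDpos hDpos]
      have hdeq : a * ((c⁻¹ * (M - D) * D - N * (c⁻¹ * N)) / D ^ 2)
          = (1 - q)⁻¹ * ((M * D - N * N) / D ^ 2 - 1) := by
        rw [ha, ← hc2]
        field_simp
        ring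
      rw [hdeq, abs_mul, abs_of_nonneg (inv_nonneg.2 h1q.le)]
      apply mul_le_mul_of_nonneg_left _ (inv_nonneg.2 h1q.le)
      have hR0 : 0 ≤ (M * D - N * N) / D ^ 2 := div_nonneg (by linarith) (by positivity)
      have hR1 : (M * D - N * N) / D ^ 2 ≤ K₂ / 2 := by
        rw [div_le_iff₀ (by positivity)]
        nlinarith
      exact abs_le.2 ⟨by linarith, by linarith⟩
  refine ⟨key, ?_⟩
  apply lipschitzWith_of_nnnorm_deriv_le
  · intro x
    exact ((key x).choose_spec.1).differentiableAt
  · intro x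
    have h := (key x).choose_spec
    rw [h.1.deriv, ← NNReal.coe_le_coe, coe_nnnorm, Real.norm_eq_abs, Real.coe_toNNReal']
    exact le_trans h.2 (le_max_left _ _)
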